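/- For every speed c with 0 < c < 2√α, there is no monotone traveling wave solution of (TW) with speed c; that is, there is no traveling wave solution (u, v) of (TW) with speed c such that both u and v are monotonically increasing on ℝ. -/

import Mathlib

open Filter

/-- The equilibrium value `K* = (1 - α)/(1 - k + αk)`. -/
noncomputable def Kstar (α k : ℝ) : ℝ := (1 - α) / (1 - k + α * k)

/-- A traveling wave solution of system (TW) with speed `c`. -/
def IsTravelingWave (α k c : ℝ) (u v : ℝ → ℝ) : Prop :=
  ContDiff ℝ 2 u ∧ ContDiff ℝ 2 v ∧
  (∀ ξ : ℝ, deriv (deriv u) ξ - c * deriv u ξ -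
      (Kstar α k - u ξ) *
        (1 - α - (Kstar α k - u ξ + v ξ) / (1 + k * (Kstar α k - u ξ))) = 0) ∧
  (∀ ξ : ℝ, deriv (deriv v) ξ - c * deriv v ξ +
      v ξ * (1 - (Kstar α k - u ξ + v ξ) / (1 + k * (Kstar α k - u ξ))) = 0) ∧
  Tendsto u atBot (nhds 0) ∧ Tendsto v atBot (nhds 0) ∧
  Tendsto u atTop (nhds (Kstar α k)) ∧ Tendsto v atTop (nhds 1)

/-- A monotone differentiable function has nonnegative derivative. -/
theorem NMW.mono_deriv_nonneg (f : ℝ → ℝ) (x : ℝ) (hf : Monotone f)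
    (hd : DifferentiableAt ℝ f x) : 0 ≤ deriv f x := by
  have h := hd.hasDerivAt
  rw [hasDerivAt_iff_tendsto_slope] at h
  refine ge_of_tendsto h ?_
  filter_upwards [self_mem_nhdsWithin] with y hy
  rw [slope_def_field, div_eq_inv_mul]
  rcases lt_or_gt_of_ne (Ne.symm (Set.mem_compl_singleton_iff.mp hy)) with h1 | h1
  · exact mul_nonneg (inv_nonneg.mpr (by linarith)) (sub_nonneg.mpr (hf h1.le))
  · have h2 : (y - x)⁻¹ ≤ 0 := inv_nonpos.mpr (by linarith)
    have h3 : f y - f x ≤ 0 := sub_nonpos.mpr (hf h1.le)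
    nlinarith

theorem NMW.phi_hasDerivAt (c ω a ξ : ℝ) :
    HasDerivAt (fun ξ => Real.exp ((c/2)*ξ) * Real.sin (ω*ξ - ω*a))
      (Real.exp ((c/2)*ξ) * ((c/2) * Real.sin (ω*ξ - ω*a) + ω * Real.cos (ω*ξ - ω*a))) ξ := by
  have h1 : HasDerivAt (fun ξ : ℝ => Real.exp ((c/2)*ξ)) ((c/2) * Real.exp ((c/2)*ξ)) ξ := by
    simpa [mul_comm] using ((hasDerivAt_id ξ).const_mul (c/2)).exp
  have h2 : HasDerivAt (fun ξ : ℝ => Real.sin (ω*ξ - ω*a)) (ω * Real.cos (ω*ξ - ω*a)) ξ := by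
    simpa [mul_comm] using (((hasDerivAt_id ξ).const_mul ω).sub_const (ω*a)).sin
  have := h1.mul h2
  exact this.congr_deriv (by ring)

theorem NMW.psi_hasDerivAt (c ω a β ξ : ℝ) (hω2 : ω^2 = β - c^2/4) :
    HasDerivAt (fun ξ => Real.exp ((c/2)*ξ) * ((c/2) * Real.sin (ω*ξ - ω*a) + ω * Real.cos (ω*ξ - ω*a)))
      (c * (Real.exp ((c/2)*ξ) * ((c/2) * Real.sin (ω*ξ - ω*a) + ω * Real.cos (ω*ξ - ω*a)))
        - β * (Real.exp ((c/2)*ξ) * Real.sin (ω*ξ - ω*a))) ξ := by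
  have h1 : HasDerivAt (fun ξ : ℝ => Real.exp ((c/2)*ξ)) ((c/2) * Real.exp ((c/2)*ξ)) ξ := by
    simpa [mul_comm] using ((hasDerivAt_id ξ).const_mul (c/2)).exp
  have hlin : HasDerivAt (fun ξ : ℝ => ω*ξ - ω*a) ω ξ := by
    simpa [mul_comm] using ((hasDerivAt_id ξ).const_mul ω).sub_const (ω*a)
  have h2 : HasDerivAt (fun ξ : ℝ => (c/2) * Real.sin (ω*ξ - ω*a) + ω * Real.cos (ω*ξ - ω*a))
      ((c/2) * (ω * Real.cos (ω*ξ - ω*a)) + ω * (-(ω * Real.sin (ω*ξ - ω*a)))) ξ := by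
    have hs := (hlin.sin).const_mul (c/2)
    have hc := (hlin.cos).const_mul ω
    exact (hs.add hc).congr_deriv (by ring)
  have := h1.mul h2
  refine this.congr_deriv ?_
  have h3 : ω * ω = β - c^2/4 := by nlinarith
  linear_combination (-(Real.exp ((c/2)*ξ) * Real.sin (ω*ξ - ω*a))) * h3

theorem NMW.exp_neg_hasDerivAt (C ξ : ℝ) :
    HasDerivAt (fun ξ : ℝ => Real.exp (-(C*ξ))) (-C * Real.exp (-(C*ξ))) ξ := by
  have : HasDerivAt (fun ξ : ℝ => -(C*ξ)) (-C) ξ := by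
    exact (((hasDerivAt_id ξ).const_mul C).neg).congr_deriv (by simp)
  simpa [mul_comm] using this.exp

set_option maxHeartbeats 1000000

theorem no_monotone_wave_below_critical_speed
    (α k : ℝ) (hα : 0 < α) (hα1 : α < 1) (hk : 0 < k) (hk1 : k < 1)
    (c : ℝ) (hc0 : 0 < c) (hc : c < 2 * Real.sqrt α) :
    ¬ ∃ u v : ℝ → ℝ, IsTravelingWave α k c u v ∧ Monotone u ∧ Monotone v := by
  rintro ⟨u, v, ⟨hu2, hv2, -, hveq, hub, hvb, hut, hvt⟩, hmu, hmv⟩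
  set K := Kstar α k with hKdef
  have hdpos : 0 < 1 - k + α * k := by nlinarith
  have hKpos : 0 < K := div_pos (by linarith) hdpos
  have hKid : K * (1 - k + α * k) = 1 - α := by rw [hKdef, Kstar]; field_simp
  -- differentiability facts
  have hv2' : ContDiff ℝ ((1:ℕ) + 1) v := by exact_mod_cast hv2
  rw [contDiff_succ_iff_deriv] at hv2'
  obtain ⟨hvd, -, hvd1'⟩ := hv2'
  have hvd1 : Differentiable ℝ (deriv v) := hvd1'.differentiable (by norm_num)
  have hvc1 : Continuous (deriv v) := hvd1'.continuous
  -- bounds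
  have hv0 : ∀ x, 0 ≤ v x := by
    intro x
    refine le_of_tendsto hvb ?_
    filter_upwards [eventually_le_atBot x] with y hy using hmv hy
  have hv1 : ∀ x, v x ≤ 1 := by
    intro x
    refine ge_of_tendsto hvt ?_
    filter_upwards [eventually_ge_atTop x] with y hy using hmv hy
  have hu0 : ∀ x, 0 ≤ u x := by
    intro x
    refine le_of_tendsto hub ?_
    filter_upwards [eventually_le_atBot x] with y hy using hmu hy
  have huK : ∀ x, u x ≤ K := by
    intro x
    refine ge_of_tendsto hut ?_
    filter_upwards [eventually_ge_atTop x] with y hy using hmu hy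
  have hv'0 : ∀ x, 0 ≤ deriv v x := fun x => NMW.mono_deriv_nonneg v x hmv (hvd x)
  -- the reaction coefficient g
  set g : ℝ → ℝ := fun ξ => 1 - (K - u ξ + v ξ) / (1 + k * (K - u ξ)) with hgdef
  have hD : ∀ ξ, (1:ℝ) ≤ 1 + k * (K - u ξ) := by
    intro ξ; nlinarith [huK ξ]
  have hODE : ∀ ξ, deriv (deriv v) ξ = c * deriv v ξ - v ξ * g ξ := by
    intro ξ
    have h := hveq ξ
    simp only [hgdef]
    linarith
  have hgα : ∀ ξ, α - v ξ ≤ g ξ := by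
    intro ξ
    have hD' := hD ξ
    have h1 := huK ξ
    have h2 := hu0 ξ
    have h3 := hv0 ξ
    have key : (K - u ξ) * (1 - k + α * k) ≤ 1 - α := by nlinarith
    have hdiv : (K - u ξ + v ξ) / (1 + k * (K - u ξ)) ≤ 1 - α + v ξ := by
      rw [div_le_iff₀ (by linarith)]
      nlinarith
    simp only [hgdef]
    linarith
  have hgK : ∀ ξ, -K ≤ g ξ := by
    intro ξ
    have h1 := huK ξ
    have h2 := hu0 ξ
    have h3 := hv0 ξ
    have h4 := hv1 ξ
    have hdiv : (K - u ξ + v ξ) / (1 + k * (K - u ξ)) ≤ K - u ξ + v ξ :=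
      div_le_self (by linarith) (hD ξ)
    simp only [hgdef]
    linarith
  -- constants
  have hc2 : c^2 < 4*α := by
    have h := Real.sq_sqrt hα.le
    have h2 := Real.sqrt_nonneg α
    nlinarith
  set β := (c^2/4 + α)/2 with hβdef
  have hβ1 : c^2/4 < β := by rw [hβdef]; linarith
  have hβ2 : β < α := by rw [hβdef]; linarith
  set ω := Real.sqrt (β - c^2/4) with hωdef
  have hωpos : 0 < ω := Real.sqrt_pos.mpr (by linarith)
  have hω2 : ω^2 = β - c^2/4 := Real.sq_sqrt (by linarith)
  set L := Real.pi / ω with hLdef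
  have hLpos : 0 < L := div_pos Real.pi_pos hωpos
  obtain ⟨ξ₀, hξ₀⟩ : ∃ ξ₀, ∀ ξ ≤ ξ₀, v ξ < α - β := by
    have := hvb.eventually_lt_const (show (0:ℝ) < α - β by linarith)
    rw [eventually_atBot] at this
    exact this
  have hgβ : ∀ ξ ≤ ξ₀, β ≤ g ξ := by
    intro ξ hξ
    have := hgα ξ
    have := hξ₀ ξ hξ
    linarith
  by_cases hcase : ∃ a, a + L ≤ ξ₀ ∧ 0 < v a
  · -- Case A: the Wronskian / Sturm comparison argument
    obtain ⟨a, haL, hva⟩ := hcase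
    set φ : ℝ → ℝ := fun ξ => Real.exp ((c/2)*ξ) * Real.sin (ω*ξ - ω*a) with hφdef
    set ψ : ℝ → ℝ := fun ξ => Real.exp ((c/2)*ξ) *
      ((c/2) * Real.sin (ω*ξ - ω*a) + ω * Real.cos (ω*ξ - ω*a)) with hψdef
    have hφd : ∀ ξ, HasDerivAt φ (ψ ξ) ξ := fun ξ => NMW.phi_hasDerivAt c ω a ξ
    have hψd : ∀ ξ, HasDerivAt ψ (c * ψ ξ - β * φ ξ) ξ := fun ξ =>
      NMW.psi_hasDerivAt c ω a β ξ hω2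
    set W : ℝ → ℝ := fun ξ => ψ ξ * v ξ - φ ξ * deriv v ξ with hWdef
    set Z : ℝ → ℝ := fun ξ => W ξ * Real.exp (-(c*ξ)) with hZdef
    have hWd : ∀ ξ, HasDerivAt W (c * W ξ + (g ξ - β) * (φ ξ * v ξ)) ξ := by
      intro ξ
      have h1 := (hψd ξ).mul (hvd ξ).hasDerivAt
      have h2 := (hφd ξ).mul (hvd1 ξ).hasDerivAt
      have h3 := h1.sub h2
      refine h3.congr_deriv ?_
      rw [hODE ξ]
      simp only [hWdef]
      ring
    have hZd : ∀ ξ, HasDerivAt Z ((g ξ - β) * (φ ξ * v ξ) * Real.exp (-(c*ξ))) ξ := by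
      intro ξ
      have h1 := (hWd ξ).mul (NMW.exp_neg_hasDerivAt c ξ)
      exact h1.congr_deriv (by ring)
    have hmono : MonotoneOn Z (Set.Icc a (a+L)) := by
      apply monotoneOn_of_deriv_nonneg (convex_Icc _ _)
      · exact Continuous.continuousOn (by
          have : Differentiable ℝ Z := fun ξ => (hZd ξ).differentiableAt
          exact this.continuous)
      · intro x _
        exact (hZd x).differentiableAt.differentiableWithinAt
      · intro x hx
        rw [interior_Icc] at hx
        rw [(hZd x).deriv]
        have hx1 : a ≤ x := hx.1.le
        have hx2 : x ≤ ξ₀ := le_trans hx.2.le haL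
        have hsin : 0 ≤ Real.sin (ω*x - ω*a) := by
          apply Real.sin_nonneg_of_nonneg_of_le_pi
          · nlinarith
          · have : ω * x - ω * a ≤ ω * L := by nlinarith [hx.2.le]
            have hωL : ω * L = Real.pi := by
              rw [hLdef]
              field_simp
            linarith
        have hφ0 : 0 ≤ φ x := mul_nonneg (Real.exp_pos _).le hsin
        have hgx := hgβ x hx2
        exact mul_nonneg (mul_nonneg (by linarith) (mul_nonneg hφ0 (hv0 x)))
          (Real.exp_pos _).le
    have hωa : ω * a - ω * a = 0 := by ring
    have hZa : 0 < Z a := by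
      simp only [hZdef, hWdef, hφdef, hψdef, hωa, Real.sin_zero, Real.cos_zero]
      have e1 := Real.exp_pos ((c/2)*a)
      have e2 := Real.exp_pos (-(c*a))
      nlinarith [mul_pos (mul_pos (mul_pos e1 hωpos) hva) e2]
    have hZb : Z (a+L) ≤ 0 := by
      have hπ : ω*(a+L) - ω*a = Real.pi := by
        rw [hLdef]
        field_simp
        ring
      have hφL : φ (a+L) = 0 := by
        simp only [hφdef]
        rw [hπ]
        simp
      have hψL : ψ (a+L) = -(ω * Real.exp ((c/2)*(a+L))) := by
        simp only [hψdef]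
        rw [hπ]
        simp
        ring
      have h3 := hv0 (a+L)
      have key : 0 ≤ ω * Real.exp ((c/2)*(a+L)) * v (a+L) * Real.exp (-(c*(a+L))) :=
        mul_nonneg (mul_nonneg (mul_nonneg hωpos.le (Real.exp_pos _).le) h3)
          (Real.exp_pos _).le
      simp only [hZdef, hWdef, hφL, hψL, zero_mul, sub_zero, neg_mul]
      exact neg_nonpos_of_nonneg key
    have hka : a ∈ Set.Icc a (a+L) := Set.mem_Icc.mpr ⟨le_rfl, by linarith⟩
    have hkb : a+L ∈ Set.Icc a (a+L) := Set.mem_Icc.mpr ⟨by linarith, le_rfl⟩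
    have := hmono hka hkb (by linarith)
    linarith
  · -- Case B: v vanishes on a left half-line; Gronwall forces v ≡ 0
    push_neg at hcase
    set ξ₁ := ξ₀ - L with hξ₁def
    have hzero : ∀ x ≤ ξ₁, v x = 0 := by
      intro x hx
      exact le_antisymm (hcase x (by rw [hξ₁def] at hx; linarith)) (hv0 x)
    have hv₁ : v ξ₁ = 0 := hzero ξ₁ le_rfl
    have hv'int : ∀ x < ξ₁, deriv v x = 0 := by
      intro x hx
      have hev : v =ᶠ[nhds x] (fun _ => 0) := by
        filter_upwards [Iio_mem_nhds hx] with y hy using hzero y hy.le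
      rw [hev.deriv_eq]
      simp
    have hv'₁ : deriv v ξ₁ = 0 := by
      have hcont : Filter.Tendsto (deriv v) (nhdsWithin ξ₁ (Set.Iio ξ₁)) (nhds (deriv v ξ₁)) :=
        (hvc1.continuousAt).continuousWithinAt
      have h0 : Filter.Tendsto (deriv v) (nhdsWithin ξ₁ (Set.Iio ξ₁)) (nhds 0) := by
        apply Filter.Tendsto.congr' ?_ tendsto_const_nhds
        filter_upwards [self_mem_nhdsWithin] with y hy
        exact (hv'int y hy).symm
      exact tendsto_nhds_unique hcont h0
    set C := 1 + c + K with hCdef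
    set F : ℝ → ℝ := fun ξ => (v ξ + deriv v ξ) * Real.exp (-(C*ξ)) with hFdef
    have hFd : ∀ ξ, HasDerivAt F
        ((deriv v ξ + deriv (deriv v) ξ - C*(v ξ + deriv v ξ)) * Real.exp (-(C*ξ))) ξ := by
      intro ξ
      have h1 := ((hvd ξ).hasDerivAt.add (hvd1 ξ).hasDerivAt).mul (NMW.exp_neg_hasDerivAt C ξ)
      exact h1.congr_deriv (by simp only [Pi.add_apply]; ring)
    have hFderiv : ∀ ξ, deriv F ξ ≤ 0 := by
      intro ξ
      rw [(hFd ξ).deriv]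
      have hmain : deriv v ξ + deriv (deriv v) ξ - C*(v ξ + deriv v ξ) ≤ 0 := by
        rw [hODE ξ, hCdef]
        have h1 := hv'0 ξ
        have h2 := hv0 ξ
        have h3 := hgK ξ
        nlinarith [mul_nonneg h2 (show (0:ℝ) ≤ g ξ + K by linarith)]
      exact mul_nonpos_of_nonpos_of_nonneg hmain (Real.exp_pos _).le
    have hanti : Antitone F := by
      apply antitone_of_deriv_nonpos
      · exact fun ξ => (hFd ξ).differentiableAt
      · exact hFderiv
    have hvz : ∀ x, v x = 0 := by
      intro x
      rcases le_or_gt x ξ₁ with hx | hx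
      · exact hzero x hx
      · have h1 : F x ≤ F ξ₁ := hanti hx.le
        have h2 : F ξ₁ = 0 := by
          simp [hFdef, hv₁, hv'₁]
        have h3 : 0 ≤ (v x + deriv v x) := by
          have := hv0 x
          have := hv'0 x
          linarith
        have h4 : 0 ≤ F x := mul_nonneg h3 (Real.exp_pos _).le
        have h5 : F x = 0 := le_antisymm (by linarith) h4
        have h6 : v x + deriv v x = 0 := by
          have := Real.exp_pos (-(C*x))
          by_contra hne
          have : F x ≠ 0 := mul_ne_zero hne (by positivity)
          exact this h5
        have := hv'0 x
        have := hv0 x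
        linarith
    have hlim0 : Filter.Tendsto v atTop (nhds 0) := by
      have : v = fun _ => (0:ℝ) := funext hvz
      rw [this]
      exact tendsto_const_nhds
    have : (1:ℝ) = 0 := tendsto_nhds_unique hvt hlim0
    norm_num at this
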